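/- Assume each distribution has infinite support, i.e. F_i(t) < 1 for all t > 0 and all i = 1,…,K. Let (P^{(n)})_n be a sequence of vectors in (0,∞)^K with P_k^{(n)} → 0 for every k, and let (λ^{(n)})_n be vectors in (0,∞)^K satisfying, for every k and n, the power constraint ∫_{λ_k^{(n)}}^∞ (1/λ_k^{(n)} − 1/h) · ∏_{i≠k} F_i((λ_i^{(n)}/λ_k^{(n)})·h) · f_k(h) dh = P_k^{(n)}. Then λ_k^{(n)} → ∞ as n → ∞, for every k = 1,…,K. (Lemma 1: the Lagrange multipliers of the sum-rate-optimal MAC power allocation diverge at asymptotically low power.) -/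
import Mathlib
open MeasureTheory Filter Set Topology

noncomputable def Fcdf (f : ℝ → ℝ) (t : ℝ) : ℝ := ∫ γ in (0:ℝ)..t, f γ

section Aux
variable {f : ℝ → ℝ} (hnn : ∀ x, 0 ≤ f x) (hzero : ∀ x ≤ (0:ℝ), f x = 0)
  (hint : IntegrableOn f (Set.Ioi (0:ℝ)))

include hzero hint in
lemma integrable_glob : Integrable f := by
  have : IntegrableOn f (Set.Iic (0:ℝ)) := by
    have : Set.EqOn f 0 (Set.Iic (0:ℝ)) := fun x hx => hzero x hx
    exact (integrableOn_congr_fun this measurableSet_Iic).mpr integrableOn_zero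
  have h := this.union hint
  rwa [Set.Iic_union_Ioi, integrableOn_univ] at h

include hnn hzero hint in
lemma Fcdf_mono : Monotone (Fcdf f) := by
  intro s t hst
  have hi := integrable_glob hzero hint
  have h1 : Fcdf f t = Fcdf f s + ∫ γ in s..t, f γ := by
    rw [Fcdf, Fcdf, intervalIntegral.integral_add_adjacent_intervals
      hi.intervalIntegrable hi.intervalIntegrable]
  rw [h1]
  have : 0 ≤ ∫ γ in s..t, f γ :=
    intervalIntegral.integral_nonneg hst (fun x _ => hnn x)
  linarith

lemma Fcdf_eq_Ioc {t : ℝ} (ht : 0 ≤ t) : Fcdf f t = ∫ γ in Set.Ioc 0 t, f γ := by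
  rw [Fcdf, intervalIntegral.integral_of_le ht]

include hnn hint in
lemma Fcdf_le_one (hone : ∫ γ in Set.Ioi (0:ℝ), f γ = 1) (t : ℝ) (ht : 0 ≤ t) :
    Fcdf f t ≤ 1 := by
  rw [Fcdf_eq_Ioc ht, ← hone]
  apply setIntegral_mono_set hint
  · exact Filter.Eventually.of_forall (fun x => hnn x)
  · exact HasSubset.Subset.eventuallyLE Set.Ioc_subset_Ioi_self

include hint in
lemma Fcdf_tendsto (hone : ∫ γ in Set.Ioi (0:ℝ), f γ = 1) :
    Tendsto (Fcdf f) atTop (nhds 1) := by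
  have := intervalIntegral_tendsto_integral_Ioi 0 hint tendsto_id
  rwa [hone] at this

include hint in
lemma tail_eq (hone : ∫ γ in Set.Ioi (0:ℝ), f γ = 1) {t : ℝ} (ht : 0 ≤ t) :
    ∫ γ in Set.Ioi t, f γ = 1 - Fcdf f t := by
  have hu : Set.Ioc 0 t ∪ Set.Ioi t = Set.Ioi 0 := Set.Ioc_union_Ioi_eq_Ioi ht
  have hd : Disjoint (Set.Ioc 0 t) (Set.Ioi t) := by
    rw [Set.disjoint_left]; intro x hx h2; exact absurd hx.2 (not_le.mpr h2)
  have := setIntegral_union hd measurableSet_Ioi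
    (hint.mono_set (hu ▸ Set.subset_union_left))
    (hint.mono_set (hu ▸ Set.subset_union_right))
  rw [hu, hone, Fcdf_eq_Ioc ht] at *
  linarith [this]
end Aux

lemma Fcdf_nonneg {f : ℝ → ℝ} (hnn : ∀ x, 0 ≤ f x) {t : ℝ} (ht : 0 ≤ t) : 0 ≤ Fcdf f t :=
  intervalIntegral.integral_nonneg ht (fun x _ => hnn x)

lemma key_estimate (K : ℕ) (f : Fin K → ℝ → ℝ)
    (hmeas : ∀ i, Measurable (f i))
    (hnn : ∀ i x, 0 ≤ f i x)
    (hzero : ∀ i, ∀ x ≤ (0:ℝ), f i x = 0)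
    (hint : ∀ i, IntegrableOn (f i) (Set.Ioi (0:ℝ)))
    (hone : ∀ i, ∫ γ in Set.Ioi (0:ℝ), f i γ = 1)
    (k : Fin K) (M T : ℝ) (hM : 0 < M) (hMT : M ≤ T)
    (hT : ∀ i, 1/2 ≤ Fcdf (f i) T)
    (l : Fin K → ℝ) (hpos : ∀ i, 0 < l i) (hlM : l k ≤ M) (hmin : ∀ i, l k ≤ l i) :
    1/(2*M) * (1/2:ℝ)^((Finset.univ.erase k).card) * (1 - Fcdf (f k) (2*T)) ≤
      ∫ h in Set.Ioi (l k),
        (1 / l k - 1 / h) *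
          (∏ i ∈ Finset.univ.erase k, Fcdf (f i) (l i / l k * h)) * f k h := by
  set lk := l k with hlk
  have hlkpos : 0 < lk := hpos k
  have hT0 : 0 < T := lt_of_lt_of_le hM hMT
  set g : ℝ → ℝ := fun h =>
    (1 / lk - 1 / h) * (∏ i ∈ Finset.univ.erase k, Fcdf (f i) (l i / lk * h)) * f k h
    with hg
  -- measurability
  have hFm : ∀ i : Fin K, Measurable (fun h : ℝ => Fcdf (f i) (l i / lk * h)) := by
    intro i
    exact (Fcdf_mono (hnn i) (hzero i) (hint i)).measurable.comp
      (measurable_id.const_mul _)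
  have hgmeas : Measurable g := by
    apply Measurable.mul
    · apply Measurable.mul
      · exact measurable_const.sub (measurable_const.div measurable_id)
      · exact Finset.measurable_prod _ (fun i _ => hFm i)
    · exact hmeas k
  -- nonnegativity of the integrand on `Ioi lk`
  have hprod_nonneg : ∀ h : ℝ, 0 < h →
      0 ≤ ∏ i ∈ Finset.univ.erase k, Fcdf (f i) (l i / lk * h) := by
    intro h hh
    apply Finset.prod_nonneg
    intro i _
    exact Fcdf_nonneg (hnn i) (le_of_lt (mul_pos (div_pos (hpos i) hlkpos) hh))
  have hprod_le_one : ∀ h : ℝ, 0 < h →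
      (∏ i ∈ Finset.univ.erase k, Fcdf (f i) (l i / lk * h)) ≤ 1 := by
    intro h hh
    apply Finset.prod_le_one
    · intro i _
      exact Fcdf_nonneg (hnn i) (le_of_lt (mul_pos (div_pos (hpos i) hlkpos) hh))
    · intro i _
      exact Fcdf_le_one (hnn i) (hint i) (hone i) _
        (le_of_lt (mul_pos (div_pos (hpos i) hlkpos) hh))
  have hgnn : ∀ h ∈ Set.Ioi lk, 0 ≤ g h := by
    intro h hh
    have hh' : lk < h := hh
    have hhpos : 0 < h := lt_trans hlkpos hh'
    apply mul_nonneg (mul_nonneg ?_ (hprod_nonneg h hhpos)) (hnn k h)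
    have := one_div_le_one_div_of_le hlkpos (le_of_lt hh')
    linarith
  -- integrability of g on Ioi lk
  have hgint : IntegrableOn g (Set.Ioi lk) := by
    apply Integrable.mono' (g := fun h => (1/lk) * f k h)
      (((hint k).mono_set (Set.Ioi_subset_Ioi (le_of_lt hlkpos))).const_mul _)
      hgmeas.aestronglyMeasurable
    filter_upwards [ae_restrict_mem measurableSet_Ioi] with h hh
    have hh' : lk < h := hh
    have hhpos : 0 < h := lt_trans hlkpos hh'
    rw [Real.norm_eq_abs, abs_of_nonneg (hgnn h hh)]
    have h1 : 1 / lk - 1 / h ≤ 1 / lk := by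
      have : 0 < 1 / h := by positivity
      linarith
    calc g h ≤ (1/lk) * 1 * f k h := by
          apply mul_le_mul_of_nonneg_right ?_ (hnn k h)
          apply mul_le_mul h1 (hprod_le_one h hhpos) (hprod_nonneg h hhpos)
          positivity
      _ = (1/lk) * f k h := by ring
  -- restrict to Ioi (2T)
  have hsub : Set.Ioi (2*T) ⊆ Set.Ioi lk :=
    Set.Ioi_subset_Ioi (by linarith)
  have step1 : ∫ h in Set.Ioi (2*T), g h ≤ ∫ h in Set.Ioi lk, g h := by
    apply setIntegral_mono_set hgint
    · filter_upwards [ae_restrict_mem measurableSet_Ioi] with h hh using hgnn h hh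
    · exact HasSubset.Subset.eventuallyLE hsub
  -- pointwise bound on Ioi (2T)
  have hc2T : (0:ℝ) ≤ 2*T := by linarith
  have step2 : 1/(2*M) * (1/2:ℝ)^((Finset.univ.erase k).card) *
      ∫ h in Set.Ioi (2*T), f k h ≤ ∫ h in Set.Ioi (2*T), g h := by
    rw [← integral_const_mul]
    apply setIntegral_mono_on
      ((((hint k).mono_set (Set.Ioi_subset_Ioi hc2T)).const_mul _))
      (hgint.mono_set hsub) measurableSet_Ioi
    intro h hh
    have hh' : 2*T < h := hh
    have hhpos : 0 < h := lt_of_le_of_lt hc2T hh'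
    apply mul_le_mul_of_nonneg_right ?_ (hnn k h)
    apply mul_le_mul
    · -- 1/(2M) ≤ 1/lk - 1/h
      have h1 : 1/M ≤ 1/lk := one_div_le_one_div_of_le hlkpos hlM
      have h2 : 1/h ≤ 1/(2*M) := by
        apply one_div_le_one_div_of_le (by linarith)
        linarith
      have h3 : 1/(2*M) = 1/M - 1/(2*M) := by
        field_simp; ring
      linarith
    · -- (1/2)^card ≤ ∏
      rw [← Finset.prod_const]
      apply Finset.prod_le_prod (fun i _ => by norm_num)
      intro i _
      have hTle : T ≤ l i / lk * h := by
        have h1 : (1:ℝ) ≤ l i / lk := (one_le_div hlkpos).mpr (hmin i)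
        have : 1 * h ≤ l i / lk * h := mul_le_mul_of_nonneg_right h1 (le_of_lt hhpos)
        linarith
      exact le_trans (hT i) (Fcdf_mono (hnn i) (hzero i) (hint i) hTle)
    · positivity
    · have h1 : 1/M ≤ 1/lk := one_div_le_one_div_of_le hlkpos hlM
      have h2 : 1/h ≤ 1/(2*M) := by
        apply one_div_le_one_div_of_le (by linarith); linarith
      have h3 : 0 < 1/(2*M) := by positivity
      have h4 : 1/(2*M) = 1/M - 1/(2*M) := by field_simp; ring
      linarith
  have htail : ∫ h in Set.Ioi (2*T), f k h = 1 - Fcdf (f k) (2*T) :=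
    tail_eq (hint k) (hone k) hc2T
  rw [htail] at step2
  exact le_trans step2 step1

/-- Lemma 1: if the average powers `P_k^{(n)}` all tend to `0` and the Lagrange
multipliers `λ^{(n)}` satisfy the power constraints (E305), then every
`λ_k^{(n)} → ∞`. -/
theorem mac_multipliers_tendsto_atTop (K : ℕ) (hK : 1 ≤ K)
    (f : Fin K → ℝ → ℝ)
    (hmeas : ∀ i, Measurable (f i))
    (hnn : ∀ i x, 0 ≤ f i x)
    (hzero : ∀ i, ∀ x ≤ (0:ℝ), f i x = 0)
    (hint : ∀ i, IntegrableOn (f i) (Set.Ioi (0:ℝ)))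
    (hone : ∀ i, ∫ γ in Set.Ioi (0:ℝ), f i γ = 1)
    (hsupp : ∀ i, ∀ t > (0:ℝ), Fcdf (f i) t < 1)
    (P : ℕ → Fin K → ℝ) (hPpos : ∀ n k, 0 < P n k)
    (hPtend : ∀ k, Tendsto (fun n => P n k) atTop (nhds 0))
    (lam : ℕ → Fin K → ℝ) (hlampos : ∀ n k, 0 < lam n k)
    (hconstraint : ∀ n (k : Fin K),
      (∫ h in Set.Ioi (lam n k),
          (1 / lam n k - 1 / h) *
            (∏ i ∈ Finset.univ.erase k, Fcdf (f i) (lam n i / lam n k * h)) *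
              f k h) = P n k) :
    ∀ k : Fin K, Tendsto (fun n => lam n k) atTop atTop := by
  haveI : NeZero K := ⟨by omega⟩
  have hne : (Finset.univ : Finset (Fin K)).Nonempty := Finset.univ_nonempty
  set m : ℕ → ℝ := fun n => Finset.univ.inf' hne (lam n) with hm
  suffices hmt : Tendsto m atTop atTop by
    intro k
    exact tendsto_atTop_mono (fun n => Finset.inf'_le _ (Finset.mem_univ k)) hmt
  rw [tendsto_atTop]
  intro b
  set M : ℝ := max b 1 with hMdef
  have hM : 0 < M := lt_of_lt_of_le one_pos (le_max_right _ _)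
  -- choose T
  have hTex : ∃ T : ℝ, M ≤ T ∧ ∀ i, 1/2 ≤ Fcdf (f i) T := by
    have h1 : ∀ᶠ t in atTop, ∀ i : Fin K, 1/2 ≤ Fcdf (f i) t := by
      rw [eventually_all]
      intro i
      exact (Fcdf_tendsto (hint i) (hone i)).eventually
        (eventually_ge_nhds (by norm_num : (1/2:ℝ) < 1))
    obtain ⟨T, hT1, hT2⟩ := ((eventually_ge_atTop M).and h1).exists
    exact ⟨T, hT1, hT2⟩
  obtain ⟨T, hMT, hT⟩ := hTex
  have hT0 : 0 < T := lt_of_lt_of_le hM hMT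
  -- positive constants
  set c : Fin K → ℝ := fun k =>
    1/(2*M) * (1/2:ℝ)^((Finset.univ.erase k).card) * (1 - Fcdf (f k) (2*T)) with hc
  have hcpos : ∀ k, 0 < c k := by
    intro k
    have h1 : Fcdf (f k) (2*T) < 1 := hsupp k (2*T) (by linarith)
    have h2 : (0:ℝ) < (1/2:ℝ)^((Finset.univ.erase k).card) := by positivity
    have h3 : (0:ℝ) < 1/(2*M) := by positivity
    have : 0 < 1 - Fcdf (f k) (2*T) := by linarith
    positivity
  -- eventually P n k < c k for all k
  have hev : ∀ᶠ n in atTop, ∀ k : Fin K, P n k < c k := by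
    rw [eventually_all]
    intro k
    exact (hPtend k).eventually (eventually_lt_nhds (hcpos k))
  -- suffices eventually M ≤ m n
  have key : ∀ᶠ n in atTop, M ≤ m n := by
    by_contra hcon
    rw [not_eventually] at hcon
    have := (hcon.and_eventually hev).exists
    obtain ⟨n, hn1, hn2⟩ := this
    rw [not_le] at hn1
    obtain ⟨k, _, hk⟩ := Finset.exists_mem_eq_inf' hne (lam n)
    have hlM : lam n k ≤ M := by rw [hm] at hn1; rw [← hk]; linarith
    have hmin : ∀ i, lam n k ≤ lam n i := by
      intro i; rw [← hk]; exact Finset.inf'_le _ (Finset.mem_univ i)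
    have hest := key_estimate K f hmeas hnn hzero hint hone k M T hM hMT hT
      (lam n) (hlampos n) hlM hmin
    rw [hconstraint n k] at hest
    exact absurd (hn2 k) (not_lt.mpr hest)
  filter_upwards [key] with n hn
  exact le_trans (le_max_left b 1) hn
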